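/- Under Assumption A in an open set U, the function F(z,u) = P(Σ_{i=1}^d u_i X_i ≤ z) is partially differentiable in u₁ with jointly continuous derivative ∂F/∂u₁ (z,u) = −sign(u₁) u₁⁻² · E[(z − Σ_{j=2}^d u_j X_j) · φ(u₁⁻¹(z − Σ_{j=2}^d u_j X_j), X₂, …, X_d)]. -/

import Mathlib

open MeasureTheory

/-- `φ` is a conditional density of `X₁` given the vector `Y = (X₂,…,X_d)`. -/
def IsCondDensity {Ω : Type*} [MeasurableSpace Ω] (μ : Measure Ω)
    {m : ℕ} (X1 : Ω → ℝ) (Y : Ω → (Fin m → ℝ)) (φ : ℝ → (Fin m → ℝ) → ℝ) : Prop :=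
  Measurable (Function.uncurry φ) ∧ (∀ t x, 0 ≤ φ t x) ∧
    ∀ A : Set ℝ, MeasurableSet A → ∀ B : Set (Fin m → ℝ), MeasurableSet B →
      (μ {ω | X1 ω ∈ A ∧ Y ω ∈ B}).toReal
        = ∫ ω in {ω | Y ω ∈ B}, ∫ t in A, φ t (Y ω) ∂(volume) ∂μ

/-- The weighted sum `Z(u) = u₁ X₁ + Σ_{j≥2} u_j X_j` for the weight vector `p = (u₁, (u_j))`. -/
noncomputable def Zw {Ω : Type*} {m : ℕ} (X1 : Ω → ℝ) (Y : Ω → (Fin m → ℝ))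
    (p : ℝ × (Fin m → ℝ)) (ω : Ω) : ℝ :=
  p.1 * X1 ω + ∑ i, p.2 i * Y ω i

/-- The distribution function `F(z, u) = P(Z(u) ≤ z)`. -/
noncomputable def Fcdf {Ω : Type*} [MeasurableSpace Ω] (μ : Measure Ω)
    {m : ℕ} (X1 : Ω → ℝ) (Y : Ω → (Fin m → ℝ)) (z : ℝ) (p : ℝ × (Fin m → ℝ)) : ℝ :=
  (μ {ω | Zw X1 Y p ω ≤ z}).toReal

/-- `E[φ(u₁⁻¹(t - Σ_{j≥2} u_j X_j), X₂,…,X_d)]`. -/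
noncomputable def densNum {Ω : Type*} [MeasurableSpace Ω] (μ : Measure Ω)
    {m : ℕ} (Y : Ω → (Fin m → ℝ)) (φ : ℝ → (Fin m → ℝ) → ℝ)
    (t : ℝ) (p : ℝ × (Fin m → ℝ)) : ℝ :=
  ∫ ω, φ (p.1⁻¹ * (t - ∑ i, p.2 i * Y ω i)) (Y ω) ∂μ

/-- `E[X_i φ(u₁⁻¹(t - Σ_{j≥2} u_j X_j), X₂,…,X_d)]` for `i ≥ 2`. -/
noncomputable def densNumX {Ω : Type*} [MeasurableSpace Ω] (μ : Measure Ω)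
    {m : ℕ} (Y : Ω → (Fin m → ℝ)) (φ : ℝ → (Fin m → ℝ) → ℝ) (i : Fin m)
    (t : ℝ) (p : ℝ × (Fin m → ℝ)) : ℝ :=
  ∫ ω, Y ω i * φ (p.1⁻¹ * (t - ∑ j, p.2 j * Y ω j)) (Y ω) ∂μ

/-- Assumption A from the paper, on the open set `U ⊆ (ℝ∖{0}) × ℝ^{d-1}`:
(i) `t ↦ φ(t,x)` is continuous; (ii) `(t,u) ↦ E[φ(u₁⁻¹(t - Σ u_j X_j), X₂,…,X_d)]`
is finite-valued and jointly continuous on `ℝ × U`; (iii) likewise for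
`(t,u) ↦ E[X_i φ(u₁⁻¹(t - Σ u_j X_j), X₂,…,X_d)]`, `i = 2,…,d`. -/
def AssumptionA {Ω : Type*} [MeasurableSpace Ω] (μ : Measure Ω)
    {m : ℕ} (X1 : Ω → ℝ) (Y : Ω → (Fin m → ℝ)) (φ : ℝ → (Fin m → ℝ) → ℝ)
    (U : Set (ℝ × (Fin m → ℝ))) : Prop :=
  IsOpen U ∧ (∀ p ∈ U, p.1 ≠ 0) ∧
  (∀ x, Continuous fun t => φ t x) ∧
  (∀ (t : ℝ), ∀ p ∈ U, Integrable (fun ω => φ (p.1⁻¹ * (t - ∑ i, p.2 i * Y ω i)) (Y ω)) μ) ∧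
  ContinuousOn (fun q : ℝ × (ℝ × (Fin m → ℝ)) => densNum μ Y φ q.1 q.2) (Set.univ ×ˢ U) ∧
  (∀ i : Fin m, ∀ (t : ℝ), ∀ p ∈ U,
    Integrable (fun ω => Y ω i * φ (p.1⁻¹ * (t - ∑ j, p.2 j * Y ω j)) (Y ω)) μ) ∧
  (∀ i : Fin m,
    ContinuousOn (fun q : ℝ × (ℝ × (Fin m → ℝ)) => densNumX μ Y φ i q.1 q.2) (Set.univ ×ˢ U))

open MeasureTheory ProbabilityTheory Set Function
open scoped ENNReal

variable {m : ℕ}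

/-- The set of "good" conditioning values, where `φ(·,x)` is a genuine probability density. -/
def Gset (φ : ℝ → (Fin m → ℝ) → ℝ) : Set (Fin m → ℝ) :=
  {x | ∫⁻ t, ENNReal.ofReal (φ t x) = 1}

noncomputable def dens (φ : ℝ → (Fin m → ℝ) → ℝ) : (Fin m → ℝ) → ℝ → ℝ≥0∞ :=
  fun x t => ((Gset φ) ×ˢ (Set.univ : Set ℝ)).indicator
    (fun p => ENNReal.ofReal (φ p.2 p.1)) (x, t)

noncomputable def kern (φ : ℝ → (Fin m → ℝ) → ℝ) : Kernel (Fin m → ℝ) ℝ :=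
  Kernel.withDensity (Kernel.const _ volume) (dens φ)

variable {φ : ℝ → (Fin m → ℝ) → ℝ}

lemma measurable_lintphi (hφm : Measurable (uncurry φ)) :
    Measurable fun x : Fin m → ℝ => ∫⁻ t, ENNReal.ofReal (φ t x) :=
  Measurable.lintegral_prod_right'
    (f := fun p : (Fin m → ℝ) × ℝ => ENNReal.ofReal (φ p.2 p.1))
    (ENNReal.measurable_ofReal.comp (hφm.comp measurable_swap))

lemma measurableSet_Gset (hφm : Measurable (uncurry φ)) : MeasurableSet (Gset φ) :=
  measurable_lintphi hφm (measurableSet_singleton 1)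

lemma measurable_dens (hφm : Measurable (uncurry φ)) : Measurable (uncurry (dens φ)) := by
  have : uncurry (dens φ) = ((Gset φ) ×ˢ (Set.univ : Set ℝ)).indicator
      (fun p => ENNReal.ofReal (φ p.2 p.1)) := by
    funext p; rfl
  rw [this]
  exact (ENNReal.measurable_ofReal.comp (hφm.comp measurable_swap)).indicator
    ((measurableSet_Gset hφm).prod MeasurableSet.univ)

lemma dens_of_mem {x : Fin m → ℝ} (hx : x ∈ Gset φ) (t : ℝ) :
    dens φ x t = ENNReal.ofReal (φ t x) :=
  Set.indicator_of_mem (Set.mk_mem_prod hx (Set.mem_univ t)) _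

lemma dens_of_not_mem {x : Fin m → ℝ} (hx : x ∉ Gset φ) (t : ℝ) :
    dens φ x t = 0 :=
  Set.indicator_of_notMem (by simp [hx]) _

lemma kern_apply (hφm : Measurable (uncurry φ)) (x : Fin m → ℝ) (s : Set ℝ) :
    kern φ x s = ∫⁻ t in s, dens φ x t := by
  rw [kern, Kernel.withDensity_apply' _ (measurable_dens hφm) x s, Kernel.const_apply]

lemma kern_univ_le (hφm : Measurable (uncurry φ)) (x : Fin m → ℝ) :
    kern φ x Set.univ ≤ 1 := by
  rw [kern_apply hφm, Measure.restrict_univ]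
  by_cases hx : x ∈ Gset φ
  · rw [lintegral_congr fun t => dens_of_mem hx t]
    exact le_of_eq hx
  · rw [lintegral_congr fun t => dens_of_not_mem hx t]
    simp

lemma kern_le_one (hφm : Measurable (uncurry φ)) (x : Fin m → ℝ) (s : Set ℝ) :
    kern φ x s ≤ 1 :=
  le_trans (measure_mono (Set.subset_univ s)) (kern_univ_le hφm x)

lemma isFiniteKernel_kern (hφm : Measurable (uncurry φ)) : IsFiniteKernel (kern φ) :=
  ⟨⟨1, ENNReal.one_lt_top, fun x => kern_univ_le hφm x⟩⟩

lemma kern_Iic (hφm : Measurable (uncurry φ)) {x : Fin m → ℝ} (hx : x ∈ Gset φ) (b : ℝ) :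
    kern φ x (Set.Iic b) = ∫⁻ t in Set.Iic b, ENNReal.ofReal (φ t x) := by
  rw [kern_apply hφm]
  exact lintegral_congr fun t => dens_of_mem hx t

lemma kern_Iio_eq_Iic (hφm : Measurable (uncurry φ)) (x : Fin m → ℝ) (b : ℝ) :
    kern φ x (Set.Iio b) = kern φ x (Set.Iic b) := by
  rw [kern_apply hφm, kern_apply hφm]
  exact setLIntegral_congr Iio_ae_eq_Iic

lemma integrable_of_mem_Gset {x : Fin m → ℝ} (hφm : Measurable (uncurry φ))
    (hφ0 : ∀ t x, 0 ≤ φ t x) (hx : x ∈ Gset φ) :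
    Integrable (fun t => φ t x) (volume : Measure ℝ) := by
  refine ⟨((hφm.comp (measurable_id.prodMk measurable_const)).stronglyMeasurable).aestronglyMeasurable, ?_⟩
  rw [hasFiniteIntegral_iff_norm]
  have : ∀ t, ENNReal.ofReal ‖φ t x‖ = ENNReal.ofReal (φ t x) := fun t => by
    rw [Real.norm_eq_abs, abs_of_nonneg (hφ0 t x)]
  simp_rw [this]
  rw [hx]
  exact ENNReal.one_lt_top

lemma integral_Iic_eq_toReal {x : Fin m → ℝ} (hφm : Measurable (uncurry φ))
    (hφ0 : ∀ t x, 0 ≤ φ t x) (hx : x ∈ Gset φ) (b : ℝ) :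
    ∫ t in Set.Iic b, φ t x = (kern φ x (Set.Iic b)).toReal := by
  rw [kern_Iic hφm hx b]
  rw [integral_eq_lintegral_of_nonneg_ae (Filter.Eventually.of_forall fun t => hφ0 t x)
    ((hφm.comp (measurable_id.prodMk measurable_const)).stronglyMeasurable).aestronglyMeasurable]

lemma integral_setA_eq_toReal {x : Fin m → ℝ} (hφm : Measurable (uncurry φ))
    (hφ0 : ∀ t x, 0 ≤ φ t x) (A : Set ℝ) :
    ∫ t in A, φ t x = (∫⁻ t in A, ENNReal.ofReal (φ t x)).toReal := by
  rw [integral_eq_lintegral_of_nonneg_ae (Filter.Eventually.of_forall fun t => hφ0 t x)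
    ((hφm.comp (measurable_id.prodMk measurable_const)).stronglyMeasurable).aestronglyMeasurable]
section LawSection

variable {Ω : Type*} [MeasurableSpace Ω] {μ : Measure Ω} [IsProbabilityMeasure μ]
  {X1 : Ω → ℝ} {Y : Ω → (Fin m → ℝ)}

/-- a.e. every conditioning value is good. -/
lemma nullG_compl (hY : Measurable Y) (hφ : IsCondDensity μ X1 Y φ) :
    (Measure.map Y μ) (Gset φ)ᶜ = 0 := by
  obtain ⟨hφm, hφ0, hrect⟩ := hφ
  haveI : IsProbabilityMeasure (Measure.map Y μ) := Measure.isProbabilityMeasure_map hY.aemeasurable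
  set H : (Fin m → ℝ) → ℝ := fun x => ∫ t, φ t x with hH
  have hHsm : StronglyMeasurable H :=
    StronglyMeasurable.integral_prod_right'
      (f := fun p : (Fin m → ℝ) × ℝ => φ p.2 p.1)
      (hφm.comp measurable_swap).stronglyMeasurable
  have key : ∀ B : Set (Fin m → ℝ), MeasurableSet B →
      ∫ x in B, H x ∂(Measure.map Y μ) = ((Measure.map Y μ) B).toReal := by
    intro B hB
    have h0 := hrect Set.univ MeasurableSet.univ B hB
    have hset1 : {ω | X1 ω ∈ Set.univ ∧ Y ω ∈ B} = Y ⁻¹' B := by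
      ext ω; simp
    have hset2 : {ω | Y ω ∈ B} = Y ⁻¹' B := rfl
    rw [hset1, hset2] at h0
    simp only [Measure.restrict_univ] at h0
    rw [setIntegral_map hB hHsm.aestronglyMeasurable hY.aemeasurable, Measure.map_apply hY hB]
    exact h0.symm
  have hHint : Integrable H (Measure.map Y μ) := by
    by_contra hc
    have := key Set.univ MeasurableSet.univ
    rw [Measure.restrict_univ, integral_undef hc] at this
    simp at this
  have hae : H =ᵐ[Measure.map Y μ] fun _ => (1 : ℝ) := by
    refine ae_eq_of_forall_setIntegral_eq_of_sigmaFinite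
      (fun s hs _ => hHint.integrableOn) (fun s hs _ => (integrable_const 1).integrableOn) ?_
    intro s hs _
    rw [key s hs, setIntegral_const, smul_eq_mul, mul_one]; rfl
  have : ∀ᵐ x ∂(Measure.map Y μ), x ∈ Gset φ := by
    filter_upwards [hae] with x hx
    by_cases hint : Integrable (fun t => φ t x) (volume : Measure ℝ)
    · have h1 : ENNReal.ofReal (∫ t, φ t x) = ∫⁻ t, ENNReal.ofReal (φ t x) :=
        ofReal_integral_eq_lintegral_ofReal hint
          (Filter.Eventually.of_forall fun t => hφ0 t x)
      have : H x = 1 := hx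
      rw [hH] at this
      simp only at this
      rw [this] at h1
      simpa [Gset] using h1.symm
    · exfalso
      have : H x = 1 := hx
      rw [hH] at this
      simp only at this
      rw [integral_undef hint] at this
      norm_num at this
  rw [ae_iff] at this
  rw [Set.compl_def]
  exact this

end LawSection
section LawSection2

variable {Ω : Type*} [MeasurableSpace Ω] {μ : Measure Ω} [IsProbabilityMeasure μ]
  {X1 : Ω → ℝ} {Y : Ω → (Fin m → ℝ)}

lemma law_eq (hX1 : Measurable X1) (hY : Measurable Y) (hφ : IsCondDensity μ X1 Y φ) :
    Measure.map (fun ω => (Y ω, X1 ω)) μ = (Measure.map Y μ) ⊗ₘ kern φ := by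
  obtain ⟨hφm, hφ0, hrect⟩ := hφ
  haveI : IsProbabilityMeasure (Measure.map Y μ) := Measure.isProbabilityMeasure_map hY.aemeasurable
  haveI : IsFiniteKernel (kern φ) := isFiniteKernel_kern hφm
  have hG : MeasurableSet (Gset φ) := measurableSet_Gset hφm
  have hnull := nullG_compl hY ⟨hφm, hφ0, hrect⟩
  have haeG : ∀ᵐ x ∂(Measure.map Y μ), x ∈ Gset φ := by
    rw [ae_iff]; rwa [Set.compl_def] at hnull
  -- the rectangle identity at the level of `ℝ≥0∞`
  have rect' : ∀ A : Set ℝ, MeasurableSet A → ∀ B : Set (Fin m → ℝ), MeasurableSet B →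
      μ (Y ⁻¹' B ∩ X1 ⁻¹' A) = ∫⁻ x in B, kern φ x A ∂(Measure.map Y μ) := by
    intro A hA B hB
    have h0 := hrect A hA B hB
    have hset1 : {ω | X1 ω ∈ A ∧ Y ω ∈ B} = Y ⁻¹' B ∩ X1 ⁻¹' A := by
      ext ω; simp [and_comm]
    have hset2 : {ω | Y ω ∈ B} = Y ⁻¹' B := rfl
    rw [hset1, hset2] at h0
    -- rewrite RHS of h0 as an integral over the pushforward
    have hsm : StronglyMeasurable fun x : Fin m → ℝ => ∫ t in A, φ t x :=
      StronglyMeasurable.integral_prod_right'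
        (f := fun p : (Fin m → ℝ) × ℝ => φ p.2 p.1)
        (hφm.comp measurable_swap).stronglyMeasurable
    have h1 : (∫ ω in Y ⁻¹' B, (∫ t in A, φ t (Y ω)) ∂μ)
        = ∫ x in B, (∫ t in A, φ t x) ∂(Measure.map Y μ) :=
      (setIntegral_map hB hsm.aestronglyMeasurable hY.aemeasurable).symm
    -- a.e. rewrite the inner integral as toReal of the kernel
    have h2 : ∫ x in B, (∫ t in A, φ t x) ∂(Measure.map Y μ)
        = ∫ x in B, (kern φ x A).toReal ∂(Measure.map Y μ) := by
      refine setIntegral_congr_ae hB ?_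
      filter_upwards [haeG] with x hx _
      rw [integral_setA_eq_toReal hφm hφ0 A, kern_apply hφm]
      congr 1
      exact (lintegral_congr fun t => (dens_of_mem hx t).symm)
    have hmeas : Measurable fun x => kern φ x A := Kernel.measurable_coe _ hA
    have h3 : ∫ x in B, (kern φ x A).toReal ∂(Measure.map Y μ)
        = (∫⁻ x in B, kern φ x A ∂(Measure.map Y μ)).toReal := by
      refine integral_toReal (hmeas.aemeasurable.restrict) ?_
      exact Filter.Eventually.of_forall fun x =>
        lt_of_le_of_lt (kern_le_one hφm x A) ENNReal.one_lt_top
    have hfin1 : μ (Y ⁻¹' B ∩ X1 ⁻¹' A) ≠ ⊤ := measure_ne_top μ _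
    have hfin2 : (∫⁻ x in B, kern φ x A ∂(Measure.map Y μ)) ≠ ⊤ := by
      refine ne_of_lt (lt_of_le_of_lt ?_ ENNReal.one_lt_top)
      calc ∫⁻ x in B, kern φ x A ∂(Measure.map Y μ)
          ≤ ∫⁻ _ in B, 1 ∂(Measure.map Y μ) :=
            lintegral_mono fun x => kern_le_one hφm x A
        _ ≤ 1 := by simp [lintegral_one]; exact prob_le_one
    rw [h1, h2, h3] at h0
    exact (ENNReal.toReal_eq_toReal_iff' hfin1 hfin2).mp h0
  -- conclude by uniqueness of measures on a π-system
  refine MeasureTheory.ext_of_generate_finite _ generateFrom_prod.symm isPiSystem_prod ?_ ?_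
  · rintro _ ⟨B, hB, A, hA, rfl⟩
    simp only [Set.mem_setOf_eq] at hA hB
    rw [Measure.map_apply (hY.prodMk hX1) (hB.prod hA)]
    have : (fun ω => (Y ω, X1 ω)) ⁻¹' (B ×ˢ A) = Y ⁻¹' B ∩ X1 ⁻¹' A := rfl
    rw [this, rect' A hA B hB, Measure.compProd_apply_prod hB hA]
  · rw [Measure.map_apply (hY.prodMk hX1) MeasurableSet.univ]
    simp only [Set.preimage_univ, measure_univ]
    rw [Measure.compProd_apply MeasurableSet.univ]
    have : ∀ᵐ x ∂(Measure.map Y μ), kern φ x (Prod.mk x ⁻¹' Set.univ) = 1 := by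
      filter_upwards [haeG] with x hx
      simp only [Set.preimage_univ]
      rw [kern_apply hφm, Measure.restrict_univ, lintegral_congr fun t => dens_of_mem hx t]
      exact hx
    rw [lintegral_congr_ae this]
    simp

/-- probability that `X1 ≤ g ∘ Y`. -/
lemma measure_le_eq (hX1 : Measurable X1) (hY : Measurable Y) (hφ : IsCondDensity μ X1 Y φ)
    {g : (Fin m → ℝ) → ℝ} (hg : Measurable g) :
    μ {ω | X1 ω ≤ g (Y ω)} = ∫⁻ x, kern φ x (Set.Iic (g x)) ∂(Measure.map Y μ) := by
  haveI : IsFiniteKernel (kern φ) := isFiniteKernel_kern hφ.1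
  have hS : MeasurableSet {p : (Fin m → ℝ) × ℝ | p.2 ≤ g p.1} :=
    measurableSet_le measurable_snd (hg.comp measurable_fst)
  have : {ω | X1 ω ≤ g (Y ω)} = (fun ω => (Y ω, X1 ω)) ⁻¹' {p | p.2 ≤ g p.1} := rfl
  rw [this, ← Measure.map_apply (hY.prodMk hX1) hS, law_eq hX1 hY hφ,
    Measure.compProd_apply hS]
  rfl

lemma measure_lt_eq (hX1 : Measurable X1) (hY : Measurable Y) (hφ : IsCondDensity μ X1 Y φ)
    {g : (Fin m → ℝ) → ℝ} (hg : Measurable g) :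
    μ {ω | X1 ω < g (Y ω)} = ∫⁻ x, kern φ x (Set.Iic (g x)) ∂(Measure.map Y μ) := by
  haveI : IsFiniteKernel (kern φ) := isFiniteKernel_kern hφ.1
  have hS : MeasurableSet {p : (Fin m → ℝ) × ℝ | p.2 < g p.1} :=
    measurableSet_lt measurable_snd (hg.comp measurable_fst)
  have : {ω | X1 ω < g (Y ω)} = (fun ω => (Y ω, X1 ω)) ⁻¹' {p | p.2 < g p.1} := rfl
  rw [this, ← Measure.map_apply (hY.prodMk hX1) hS, law_eq hX1 hY hφ,
    Measure.compProd_apply hS]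
  have : ∀ x : Fin m → ℝ, Prod.mk x ⁻¹' {p : (Fin m → ℝ) × ℝ | p.2 < g p.1}
      = Set.Iio (g x) := fun x => rfl
  refine lintegral_congr fun x => ?_
  rw [this x, kern_Iio_eq_Iic hφ.1]

end LawSection2
/-- One-dimensional change of variables for the Lebesgue integral. -/
lemma my_lintegral_image {s : Set ℝ} {f f' : ℝ → ℝ} (hs : MeasurableSet s)
    (hf' : ∀ x ∈ s, HasDerivWithinAt f (f' x) s x) (hf : Set.InjOn f s) (g : ℝ → ℝ≥0∞) :
    ∫⁻ x in f '' s, g x = ∫⁻ x in s, ENNReal.ofReal |f' x| * g (f x) := by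
  simpa only [ContinuousLinearMap.det_toSpanSingleton] using
    lintegral_image_eq_lintegral_abs_det_fderiv_mul volume hs
      (fun x hx => (hf' x hx).hasFDerivWithinAt) hf g

lemma measurable_kern_Iic (hφm : Measurable (uncurry φ)) {b : (Fin m → ℝ) → ℝ}
    (hb : Measurable b) :
    Measurable fun x => kern φ x (Set.Iic (b x)) := by
  have heq : (fun x => kern φ x (Set.Iic (b x)))
      = fun x => ∫⁻ t, ({p : (Fin m → ℝ) × ℝ | p.2 ≤ b p.1}.indicator
          (uncurry (dens φ))) (x, t) := by
    funext x
    rw [kern_apply hφm, ← lintegral_indicator measurableSet_Iic]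
    refine lintegral_congr fun t => ?_
    by_cases h : t ≤ b x
    · rw [Set.indicator_of_mem (Set.mem_Iic.mpr h),
        Set.indicator_of_mem (show (x, t) ∈ {p : (Fin m → ℝ) × ℝ | p.2 ≤ b p.1} from h)]
      rfl
    · rw [Set.indicator_of_notMem (by simpa using h),
        Set.indicator_of_notMem (show (x, t) ∉ {p : (Fin m → ℝ) × ℝ | p.2 ≤ b p.1} from h)]
  rw [heq]
  exact Measurable.lintegral_prod_right'
    ((measurable_dens hφm).indicator
      (measurableSet_le measurable_snd (hb.comp measurable_fst)))

section DerivSection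

variable {Ω : Type*} [MeasurableSpace Ω] {μ : Measure Ω} [IsProbabilityMeasure μ]
  {X1 : Ω → ℝ} {Y : Ω → (Fin m → ℝ)} {U : Set (ℝ × (Fin m → ℝ))}

lemma deriv_part (hX1 : Measurable X1) (hY : Measurable Y)
    (hφ : IsCondDensity μ X1 Y φ) (hA : AssumptionA μ X1 Y φ U)
    (z : ℝ) (p : ℝ × (Fin m → ℝ)) (hp : p ∈ U) :
    HasDerivAt (fun s => Fcdf μ X1 Y z (s, p.2))
      (-(Real.sign p.1) / p.1 ^ 2
        * ∫ ω, (z - ∑ j, p.2 j * Y ω j)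
            * φ (p.1⁻¹ * (z - ∑ j, p.2 j * Y ω j)) (Y ω) ∂μ) p.1 := by
  obtain ⟨hUopen, hUne, hφcont, hInt1, hCont1, hInt2, hCont2⟩ := hA
  obtain ⟨hφm, hφ0, hrect⟩ := id hφ
  obtain ⟨s₀, u⟩ := p
  simp only at *
  have hs₀ : s₀ ≠ 0 := hUne _ hp
  -- notation
  set ν : Measure (Fin m → ℝ) := Measure.map Y μ with hνdef
  haveI : IsProbabilityMeasure ν := Measure.isProbabilityMeasure_map hY.aemeasurable
  set c : (Fin m → ℝ) → ℝ := fun x => z - ∑ j, u j * x j with hcdef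
  have hsum_meas : Measurable fun x : Fin m → ℝ => z - ∑ i, u i * x i :=
    measurable_const.sub
      (Finset.measurable_sum _ fun j _ => by fun_prop)
  have hc_meas : Measurable c := hsum_meas
  have hbridge : ∀ (w : Fin m → ℝ) (r : ℝ), r⁻¹ * (z - ∑ i, u i * w i) = c w / r := by
    intro w r
    simp only [hcdef]
    rw [div_eq_inv_mul]
  have haeG : ∀ᵐ x ∂ν, x ∈ Gset φ := by
    have hnull := nullG_compl hY hφ
    rw [ae_iff]; rwa [Set.compl_def] at hnull
  -- a good ball around s₀
  obtain ⟨ε, hε, hball⟩ : ∃ ε > 0, ∀ s ∈ Metric.ball s₀ ε,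
      (s, u) ∈ U ∧ s ≠ 0 ∧ (0 < s₀ → 0 < s) ∧ (s₀ < 0 → s < 0) := by
    have hV : IsOpen {s : ℝ | (s, u) ∈ U} :=
      hUopen.preimage (continuous_id.prodMk continuous_const)
    obtain ⟨ε₀, hε₀, hb₀⟩ := Metric.isOpen_iff.mp hV s₀ hp
    refine ⟨min ε₀ |s₀|, lt_min hε₀ (abs_pos.mpr hs₀), fun s hs => ?_⟩
    have h1 : s ∈ Metric.ball s₀ ε₀ :=
      Metric.ball_subset_ball (min_le_left _ _) hs
    have h2 : |s - s₀| < |s₀| :=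
      lt_of_lt_of_le (Metric.mem_ball.mp hs) (min_le_right _ _)
    have h2' := abs_sub_lt_iff.mp h2
    rcases lt_or_gt_of_ne hs₀ with hneg | hpos
    · have hs' : s < 0 := by
        rw [abs_of_neg hneg] at h2'
        linarith [h2'.1]
      exact ⟨hb₀ h1, ne_of_lt hs', fun h => absurd h (not_lt.mpr hneg.le), fun _ => hs'⟩
    · have hs' : 0 < s := by
        rw [abs_of_pos hpos] at h2'
        linarith [h2'.2]
      exact ⟨hb₀ h1, ne_of_gt hs', fun _ => hs', fun h => absurd h (not_lt.mpr hpos.le)⟩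
  have hs₀ball : s₀ ∈ Metric.ball s₀ ε := Metric.mem_ball_self hε
  -- the function Φ and Ψ
  set Φ : ℝ → (Fin m → ℝ) → ℝ := fun b x => (kern φ x (Set.Iic b)).toReal with hΦdef
  set Ψ : ℝ → ℝ := fun s => ∫ x, Φ (c x / s) x ∂ν with hΨdef
  have hΦle1 : ∀ b x, Φ b x ≤ 1 := fun b x => by
    have := ENNReal.toReal_mono ENNReal.one_ne_top (kern_le_one hφm x (Set.Iic b))
    simpa using this
  have hΦ0 : ∀ b x, 0 ≤ Φ b x := fun b x => ENNReal.toReal_nonneg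
  have hΦmeas : ∀ s : ℝ, Measurable fun x => Φ (c x / s) x := fun s =>
    (measurable_kern_Iic hφm (hc_meas.div_const s)).ennreal_toReal
  have hΦint : ∀ s : ℝ, Integrable (fun x => Φ (c x / s) x) ν := fun s => by
    refine Integrable.mono' (integrable_const (1 : ℝ)) (hΦmeas s).aestronglyMeasurable
      (Filter.Eventually.of_forall fun x => ?_)
    rw [Real.norm_eq_abs, abs_of_nonneg (hΦ0 _ _)]
    exact hΦle1 _ _
  have hΨlint : ∀ s : ℝ, Ψ s = (∫⁻ x, kern φ x (Set.Iic (c x / s)) ∂ν).toReal := fun s => by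
    rw [hΨdef]
    exact integral_toReal (measurable_kern_Iic hφm (hc_meas.div_const s)).aemeasurable
      (Filter.Eventually.of_forall fun x =>
        lt_of_le_of_lt (kern_le_one hφm x _) ENNReal.one_lt_top)
  -- expression of the cdf on the ball
  have hFpos : 0 < s₀ → ∀ s ∈ Metric.ball s₀ ε, Fcdf μ X1 Y z (s, u) = Ψ s := by
    intro hpos s hs
    have hsp : 0 < s := (hball s hs).2.2.1 hpos
    have hset : {ω | Zw X1 Y (s, u) ω ≤ z} = {ω | X1 ω ≤ c (Y ω) / s} := by
      ext ω
      simp only [Zw, Set.mem_setOf_eq, hcdef]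
      rw [le_div_iff₀ hsp, mul_comm (X1 ω) s]
      constructor <;> intro h <;> linarith
    rw [Fcdf, hset, measure_le_eq hX1 hY hφ (hc_meas.div_const s), hΨlint s]
  have hFneg : s₀ < 0 → ∀ s ∈ Metric.ball s₀ ε, Fcdf μ X1 Y z (s, u) = 1 - Ψ s := by
    intro hneg s hs
    have hsn : s < 0 := (hball s hs).2.2.2 hneg
    have hset : {ω | Zw X1 Y (s, u) ω ≤ z} = {ω | X1 ω < c (Y ω) / s}ᶜ := by
      ext ω
      simp only [Zw, Set.mem_setOf_eq, Set.mem_compl_iff, not_lt, hcdef]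
      rw [div_le_iff_of_neg hsn, mul_comm (X1 ω) s]
      constructor <;> intro h <;> linarith
    have hmeasS : MeasurableSet {ω | X1 ω < c (Y ω) / s} :=
      measurableSet_lt hX1 ((hc_meas.comp hY).div_const s)
    rw [Fcdf, hset, measure_compl hmeasS (measure_ne_top μ _)]
    rw [measure_univ, measure_lt_eq hX1 hY hφ (hc_meas.div_const s)]
    have hle : (∫⁻ x, kern φ x (Set.Iic (c x / s)) ∂ν) ≤ 1 := by
      calc (∫⁻ x, kern φ x (Set.Iic (c x / s)) ∂ν) ≤ ∫⁻ _, 1 ∂ν :=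
            lintegral_mono fun x => kern_le_one hφm x _
        _ = 1 := by simp
    rw [ENNReal.toReal_sub_of_le hle ENNReal.one_ne_top, hΨlint s]
    simp
  -- the candidate derivative function
  set g : ℝ → ℝ := fun r => ∫ x, -(c x / r ^ 2) * φ (c x / r) x ∂ν with hgdef
  -- integrability of the pieces
  have hφm' : ∀ r : ℝ, Measurable fun x => φ (c x / r) x := fun r =>
    hφm.comp ((hc_meas.div_const r).prodMk measurable_id)
  have hlin : ∀ r : ℝ, Measurable fun x : Fin m → ℝ => φ (r⁻¹ * (z - ∑ i, u i * x i)) x :=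
    fun r => hφm.comp ((hsum_meas.const_mul r⁻¹).prodMk measurable_id)
  have hIφ : ∀ r ∈ Metric.ball s₀ ε, Integrable (fun x => φ (c x / r) x) ν := by
    intro r hr
    have h0 := hInt1 z (r, u) (hball r hr).1
    have h1 : Integrable (fun x => φ (r⁻¹ * (z - ∑ i, u i * x i)) x) ν :=
      (integrable_map_measure (hlin r).aestronglyMeasurable hY.aemeasurable).mpr h0
    refine h1.congr (Filter.Eventually.of_forall fun x => ?_)
    dsimp only
    rw [hbridge]
  have hIφX : ∀ r ∈ Metric.ball s₀ ε, ∀ j : Fin m,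
      Integrable (fun x => x j * φ (c x / r) x) ν := by
    intro r hr j
    have h0 := hInt2 j z (r, u) (hball r hr).1
    have hme : Measurable fun x : Fin m → ℝ => x j * φ (r⁻¹ * (z - ∑ i, u i * x i)) x :=
      (measurable_pi_apply j).mul (hlin r)
    have h1 : Integrable (fun x => x j * φ (r⁻¹ * (z - ∑ i, u i * x i)) x) ν :=
      (integrable_map_measure hme.aestronglyMeasurable hY.aemeasurable).mpr h0
    refine h1.congr (Filter.Eventually.of_forall fun x => ?_)
    dsimp only
    rw [hbridge]
  have hIcφ : ∀ r ∈ Metric.ball s₀ ε, Integrable (fun x => c x * φ (c x / r) x) ν := by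
    intro r hr
    have hdec : (fun x => c x * φ (c x / r) x)
        = fun x => z * φ (c x / r) x - ∑ j, u j * (x j * φ (c x / r) x) := by
      funext x
      rw [hcdef]
      simp only [sub_mul, Finset.sum_mul, mul_assoc]
    rw [hdec]
    exact ((hIφ r hr).const_mul z).sub
      (integrable_finset_sum _ fun j _ => ((hIφX r hr j).const_mul (u j)))
  -- value of g in terms of densNum
  have hgval : ∀ r : ℝ, g r = -(1 / r ^ 2) * ∫ x, c x * φ (c x / r) x ∂ν := by
    intro r
    rw [hgdef]
    simp only
    rw [← integral_const_mul]
    congr 1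
    funext x
    ring
  have hdensNum : ∀ r : ℝ, densNum μ Y φ z (r, u) = ∫ x, φ (c x / r) x ∂ν := by
    intro r
    rw [densNum]
    rw [integral_map hY.aemeasurable (hφm' r).aestronglyMeasurable]
    refine integral_congr_ae (Filter.Eventually.of_forall fun ω => ?_)
    simp only
    rw [hbridge]
  have hdensNumX : ∀ r : ℝ, ∀ j : Fin m,
      densNumX μ Y φ j z (r, u) = ∫ x, x j * φ (c x / r) x ∂ν := by
    intro r j
    rw [densNumX]
    rw [integral_map (f := fun x : Fin m → ℝ => x j * φ (c x / r) x) hY.aemeasurable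
      (((measurable_pi_apply j).mul (hφm' r) :
        Measurable fun x : Fin m → ℝ => x j * φ (c x / r) x)).aestronglyMeasurable]
    refine integral_congr_ae (Filter.Eventually.of_forall fun ω => ?_)
    simp only
    rw [hbridge]
  have hform : ∀ r ∈ Metric.ball s₀ ε, g r
      = -(1 / r ^ 2) * (z * densNum μ Y φ z (r, u)
          - ∑ j, u j * densNumX μ Y φ j z (r, u)) := by
    intro r hr
    rw [hgval r, hdensNum r]
    congr 1
    have hdec : (fun x => c x * φ (c x / r) x)
        = fun x => z * φ (c x / r) x - ∑ j, u j * (x j * φ (c x / r) x) := by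
      funext x
      rw [hcdef]
      simp only [sub_mul, Finset.sum_mul, mul_assoc]
    rw [hdec, integral_sub ((hIφ r hr).const_mul z)
      (integrable_finset_sum _ fun j _ => ((hIφX r hr j).const_mul (u j))),
      integral_const_mul, integral_finset_sum _ fun j _ => (hIφX r hr j).const_mul (u j)]
    congr 1
    refine Finset.sum_congr rfl fun j _ => ?_
    rw [integral_const_mul, hdensNumX r j]
  -- continuity of g on the ball
  have hgcont : ContinuousOn g (Metric.ball s₀ ε) := by
    have hc1 : ContinuousOn (fun r : ℝ => -(1 / r ^ 2)) (Metric.ball s₀ ε) := by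
      intro r hr
      exact ((continuousAt_const.div ((continuous_pow 2).continuousAt)
        (pow_ne_zero 2 (hball r hr).2.1)).neg).continuousWithinAt
    have hmapsTo : ∀ r ∈ Metric.ball s₀ ε,
        ((z, (r, u)) : ℝ × (ℝ × (Fin m → ℝ))) ∈ (Set.univ ×ˢ U) := fun r hr =>
      Set.mk_mem_prod (Set.mem_univ z) (hball r hr).1
    have hcr : Continuous fun r : ℝ => ((z, (r, u)) : ℝ × (ℝ × (Fin m → ℝ))) :=
      continuous_const.prodMk (continuous_id.prodMk continuous_const)
    have hc2 : ContinuousOn (fun r : ℝ => densNum μ Y φ z (r, u)) (Metric.ball s₀ ε) :=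
      hCont1.comp hcr.continuousOn hmapsTo
    have hc3 : ∀ j : Fin m, ContinuousOn (fun r : ℝ => densNumX μ Y φ j z (r, u))
        (Metric.ball s₀ ε) := fun j => (hCont2 j).comp hcr.continuousOn hmapsTo
    refine ContinuousOn.congr (f := fun r => -(1 / r ^ 2) * (z * densNum μ Y φ z (r, u)
      - ∑ j, u j * densNumX μ Y φ j z (r, u))) ?_ ?_
    · exact hc1.mul ((continuousOn_const.mul hc2).sub
        (continuousOn_finset_sum _ fun j _ => continuousOn_const.mul (hc3 j)))
    · intro r hr
      exact hform r hr
  -- derivative of r ↦ c x / r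
  have hderiv : ∀ x : Fin m → ℝ, ∀ r : ℝ, r ≠ 0 →
      HasDerivAt (fun r : ℝ => c x / r) (-(c x / r ^ 2)) r := by
    intro x r hr
    have h1 := (hasDerivAt_inv hr).const_mul (c x)
    have h2 : c x * -(r ^ 2)⁻¹ = -(c x / r ^ 2) := by ring
    rw [h2] at h1
    refine h1.congr_of_eventuallyEq (Filter.Eventually.of_forall fun y => ?_)
    dsimp only
    rw [div_eq_mul_inv]
  -- joint measurability of the Fubini integrand
  have hmeas_h : Measurable fun q : (Fin m → ℝ) × ℝ =>
      -(c q.1 / q.2 ^ 2) * φ (c q.1 / q.2) q.1 := by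
    have m1 : Measurable fun q : (Fin m → ℝ) × ℝ => c q.1 / q.2 :=
      (hc_meas.comp measurable_fst).div measurable_snd
    have m2 : Measurable fun q : (Fin m → ℝ) × ℝ => φ (c q.1 / q.2) q.1 :=
      hφm.comp (m1.prodMk measurable_fst)
    exact (((hc_meas.comp measurable_fst).div (measurable_snd.pow_const 2)).neg).mul m2
  -- the key identity
  have hkey : ∀ s' ∈ Metric.ball s₀ ε, Ψ s' - Ψ s₀ = ∫ r in s₀..s', g r := by
    intro s' hs'
    have huIcc : Set.uIcc s₀ s' ⊆ Metric.ball s₀ ε :=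
      ((convex_ball s₀ ε).ordConnected).uIcc_subset hs₀ball hs'
    have step1 : Ψ s' - Ψ s₀ = ∫ x, (Φ (c x / s') x - Φ (c x / s₀) x) ∂ν :=
      (integral_sub (hΦint s') (hΦint s₀)).symm
    have step2 : ∀ᵐ x ∂ν, Φ (c x / s') x - Φ (c x / s₀) x
        = ∫ r in s₀..s', -(c x / r ^ 2) * φ (c x / r) x := by
      filter_upwards [haeG] with x hx
      have hint : Integrable (fun t => φ t x) (volume : Measure ℝ) :=
        integrable_of_mem_Gset hφm hφ0 hx
      have sub1 : Φ (c x / s') x - Φ (c x / s₀) x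
          = ∫ t in (c x / s₀)..(c x / s'), φ t x := by
        simp only [hΦdef]
        rw [← integral_Iic_eq_toReal hφm hφ0 hx, ← integral_Iic_eq_toReal hφm hφ0 hx]
        exact intervalIntegral.integral_Iic_sub_Iic hint.integrableOn hint.integrableOn
      have sub2 : ∫ r in s₀..s', (-(c x / r ^ 2)) • φ (c x / r) x
          = ∫ t in (c x / s₀)..(c x / s'), φ t x := by
        refine intervalIntegral.integral_comp_smul_deriv (fun r hr => ?_) ?_ (hφcont x)
        · exact hderiv x r (hball r (huIcc hr)).2.1
        · intro r hr
          exact ((continuousAt_const.div ((continuous_pow 2).continuousAt)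
            (pow_ne_zero 2 (hball r (huIcc hr)).2.1)).neg).continuousWithinAt
      rw [sub1, ← sub2]
      simp only [smul_eq_mul]
    have main : ∀ a b : ℝ, a ∈ Metric.ball s₀ ε → b ∈ Metric.ball s₀ ε → a ≤ b →
        ∫ x, (∫ r in Set.Ioc a b, -(c x / r ^ 2) * φ (c x / r) x) ∂ν
          = ∫ r in Set.Ioc a b, g r := by
      intro a b ha hb hab
      have hIoc_ball : Set.Ioc a b ⊆ Metric.ball s₀ ε := by
        refine Set.Subset.trans Set.Ioc_subset_Icc_self ?_
        have := ((convex_ball s₀ ε).ordConnected).uIcc_subset ha hb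
        rwa [Set.uIcc_of_le hab] at this
      haveI : IsFiniteMeasure ((volume : Measure ℝ).restrict (Set.Ioc a b)) := by
        constructor
        rw [Measure.restrict_apply_univ]
        exact measure_Ioc_lt_top
      refine integral_integral_swap ?_
      constructor
      · exact hmeas_h.aestronglyMeasurable
      · rw [hasFiniteIntegral_iff_norm]
        show (∫⁻ q : (Fin m → ℝ) × ℝ,
            ENNReal.ofReal ‖-(c q.1 / q.2 ^ 2) * φ (c q.1 / q.2) q.1‖
            ∂(ν.prod ((volume : Measure ℝ).restrict (Set.Ioc a b)))) < ⊤
        rw [lintegral_prod _ (hmeas_h.norm.ennreal_ofReal.aemeasurable)]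
        have hinner : ∀ x ∈ Gset φ,
            (∫⁻ r in Set.Ioc a b,
              ENNReal.ofReal ‖-(c x / r ^ 2) * φ (c x / r) x‖) ≤ 1 := by
          intro x hx
          by_cases hcx : c x = 0
          · have : ∀ r : ℝ, ENNReal.ofReal ‖-(c x / r ^ 2) * φ (c x / r) x‖ = 0 := by
              intro r; simp [hcx]
            rw [lintegral_congr this]
            simp
          · have heq : ∀ r : ℝ, ENNReal.ofReal ‖-(c x / r ^ 2) * φ (c x / r) x‖
                = ENNReal.ofReal |(-(c x / r ^ 2))| * ENNReal.ofReal (φ (c x / r) x) := by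
              intro r
              rw [norm_mul, Real.norm_eq_abs, Real.norm_eq_abs,
                abs_of_nonneg (hφ0 _ _), ENNReal.ofReal_mul (abs_nonneg _)]
            have hd : ∀ r ∈ Set.Ioc a b, HasDerivWithinAt (fun r : ℝ => c x / r)
                (-(c x / r ^ 2)) (Set.Ioc a b) r := fun r hr =>
              (hderiv x r (hball r (hIoc_ball hr)).2.1).hasDerivWithinAt
            have hinj : Set.InjOn (fun r : ℝ => c x / r) (Set.Ioc a b) := by
              intro r1 h1 r2 h2 he
              have hr1 := (hball r1 (hIoc_ball h1)).2.1
              have hr2 := (hball r2 (hIoc_ball h2)).2.1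
              have := (div_eq_div_iff hr1 hr2).mp he
              exact mul_left_cancel₀ hcx this.symm
            calc ∫⁻ r in Set.Ioc a b, ENNReal.ofReal ‖-(c x / r ^ 2) * φ (c x / r) x‖
                = ∫⁻ r in Set.Ioc a b,
                    ENNReal.ofReal |(-(c x / r ^ 2))| * ENNReal.ofReal (φ (c x / r) x) :=
                  lintegral_congr fun r => heq r
              _ = ∫⁻ t in (fun r : ℝ => c x / r) '' (Set.Ioc a b),
                    ENNReal.ofReal (φ t x) :=
                  (my_lintegral_image measurableSet_Ioc hd hinj
                    (fun t => ENNReal.ofReal (φ t x))).symm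
              _ ≤ ∫⁻ t, ENNReal.ofReal (φ t x) := setLIntegral_le_lintegral _ _
              _ = 1 := hx
        have hb1 : (∫⁻ x, (∫⁻ r in Set.Ioc a b,
            ENNReal.ofReal ‖-(c x / r ^ 2) * φ (c x / r) x‖) ∂ν) ≤ ∫⁻ _, 1 ∂ν := by
          refine lintegral_mono_ae ?_
          filter_upwards [haeG] with x hx
          exact hinner x hx
        refine lt_of_le_of_lt hb1 ?_
        rw [lintegral_one, measure_univ]
        exact ENNReal.one_lt_top
    rw [step1, integral_congr_ae step2]
    rcases le_total s₀ s' with hle | hle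
    · simp only [intervalIntegral.integral_of_le hle]
      exact main s₀ s' hs₀ball hs' hle
    · simp only [intervalIntegral.integral_of_ge hle]
      rw [integral_neg, main s' s₀ hs' hs₀ball hle]
  -- fundamental theorem of calculus
  have hii : IntervalIntegrable g volume s₀ s₀ := by
    refine ⟨?_, ?_⟩ <;> rw [Set.Ioc_self] <;> exact integrableOn_empty
  have hsmf : StronglyMeasurableAtFilter g (nhds s₀) volume :=
    (ContinuousOn.stronglyMeasurableAtFilter Metric.isOpen_ball hgcont) s₀ hs₀ball
  have hca : ContinuousAt g s₀ := hgcont.continuousAt (Metric.isOpen_ball.mem_nhds hs₀ball)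
  have hftc := intervalIntegral.integral_hasDerivAt_right hii hsmf hca
  have hΨd : HasDerivAt Ψ (g s₀) s₀ := by
    refine HasDerivAt.congr_of_eventuallyEq (hftc.const_add (Ψ s₀)) ?_
    refine Filter.eventuallyEq_of_mem (Metric.isOpen_ball.mem_nhds hs₀ball) fun s' hs' => ?_
    have h := hkey s' hs'
    show Ψ s' = Ψ s₀ + ∫ r in s₀..s', g r
    linarith
  -- identify the target integral
  have htarget : (∫ ω, (z - ∑ j, u j * Y ω j)
        * φ (s₀⁻¹ * (z - ∑ j, u j * Y ω j)) (Y ω) ∂μ)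
      = ∫ x, c x * φ (c x / s₀) x ∂ν := by
    rw [hνdef, integral_map (f := fun x => c x * φ (c x / s₀) x) hY.aemeasurable ((hc_meas.mul (hφm' s₀) :
      Measurable fun x => c x * φ (c x / s₀) x)).aestronglyMeasurable]
    refine integral_congr_ae (Filter.Eventually.of_forall fun ω => ?_)
    dsimp only
    rw [hbridge]
  -- conclude, splitting on the sign of s₀
  rcases lt_or_gt_of_ne hs₀ with hneg | hpos
  · have hF : (fun s => Fcdf μ X1 Y z (s, u)) =ᶠ[nhds s₀] fun s => 1 - Ψ s :=
      Filter.eventuallyEq_of_mem (Metric.isOpen_ball.mem_nhds hs₀ball)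
        fun s hs => hFneg hneg s hs
    have hd2 : HasDerivAt (fun s => Fcdf μ X1 Y z (s, u)) (-(g s₀)) s₀ :=
      HasDerivAt.congr_of_eventuallyEq (hΨd.const_sub 1) hF
    have hval : -(Real.sign s₀) / s₀ ^ 2
        * (∫ ω, (z - ∑ j, u j * Y ω j)
            * φ (s₀⁻¹ * (z - ∑ j, u j * Y ω j)) (Y ω) ∂μ) = -(g s₀) := by
      rw [Real.sign_of_neg hneg, htarget, hgval s₀]
      ring
    rw [hval]
    exact hd2
  · have hF : (fun s => Fcdf μ X1 Y z (s, u)) =ᶠ[nhds s₀] Ψ :=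
      Filter.eventuallyEq_of_mem (Metric.isOpen_ball.mem_nhds hs₀ball)
        fun s hs => hFpos hpos s hs
    have hd2 : HasDerivAt (fun s => Fcdf μ X1 Y z (s, u)) (g s₀) s₀ :=
      HasDerivAt.congr_of_eventuallyEq hΨd hF
    have hval : -(Real.sign s₀) / s₀ ^ 2
        * (∫ ω, (z - ∑ j, u j * Y ω j)
            * φ (s₀⁻¹ * (z - ∑ j, u j * Y ω j)) (Y ω) ∂μ) = g s₀ := by
      rw [Real.sign_of_pos hpos, htarget, hgval s₀]
      ring
    rw [hval]
    exact hd2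

end DerivSection
section ContSection

variable {Ω : Type*} [MeasurableSpace Ω] {μ : Measure Ω} [IsProbabilityMeasure μ]
  {X1 : Ω → ℝ} {Y : Ω → (Fin m → ℝ)} {U : Set (ℝ × (Fin m → ℝ))}

lemma cont_part (hY : Measurable Y) (hA : AssumptionA μ X1 Y φ U) :
    ContinuousOn (fun q : ℝ × (ℝ × (Fin m → ℝ)) =>
        -(Real.sign q.2.1) / q.2.1 ^ 2
          * ∫ ω, (q.1 - ∑ j, q.2.2 j * Y ω j)
              * φ (q.2.1⁻¹ * (q.1 - ∑ j, q.2.2 j * Y ω j)) (Y ω) ∂μ)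
      (Set.univ ×ˢ U) := by
  obtain ⟨hUopen, hUne, hφcont, hInt1, hCont1, hInt2, hCont2⟩ := hA
  have hint_eq : ∀ q : ℝ × (ℝ × (Fin m → ℝ)), q.2 ∈ U →
      (∫ ω, (q.1 - ∑ j, q.2.2 j * Y ω j)
          * φ (q.2.1⁻¹ * (q.1 - ∑ j, q.2.2 j * Y ω j)) (Y ω) ∂μ)
        = q.1 * densNum μ Y φ q.1 q.2
          - ∑ j, q.2.2 j * densNumX μ Y φ j q.1 q.2 := by
    intro q hqU
    have hdec : (fun ω => (q.1 - ∑ j, q.2.2 j * Y ω j)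
          * φ (q.2.1⁻¹ * (q.1 - ∑ j, q.2.2 j * Y ω j)) (Y ω))
        = fun ω => q.1 * φ (q.2.1⁻¹ * (q.1 - ∑ j, q.2.2 j * Y ω j)) (Y ω)
          - ∑ j, q.2.2 j
              * (Y ω j * φ (q.2.1⁻¹ * (q.1 - ∑ j, q.2.2 j * Y ω j)) (Y ω)) := by
      funext ω
      simp only [sub_mul, Finset.sum_mul, mul_assoc]
    rw [hdec, integral_sub ((hInt1 q.1 q.2 hqU).const_mul q.1)
      (integrable_finset_sum _ fun j _ => (hInt2 j q.1 q.2 hqU).const_mul (q.2.2 j)),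
      integral_const_mul,
      integral_finset_sum _ fun j _ => (hInt2 j q.1 q.2 hqU).const_mul (q.2.2 j)]
    rw [densNum]
    congr 1
    refine Finset.sum_congr rfl fun j _ => ?_
    rw [integral_const_mul, densNumX]
  have hsignev : ∀ q : ℝ × (ℝ × (Fin m → ℝ)), q.2.1 ≠ 0 →
      (fun q' : ℝ × (ℝ × (Fin m → ℝ)) => Real.sign q'.2.1)
        =ᶠ[nhds q] fun _ => Real.sign q.2.1 := by
    intro q hne
    rcases lt_or_gt_of_ne hne with h | h
    · have hopen : IsOpen {q' : ℝ × (ℝ × (Fin m → ℝ)) | q'.2.1 < 0} :=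
        isOpen_lt (continuous_fst.comp continuous_snd) continuous_const
      refine Filter.eventuallyEq_of_mem (hopen.mem_nhds h) fun q' hq' => ?_
      rw [Real.sign_of_neg hq', Real.sign_of_neg h]
    · have hopen : IsOpen {q' : ℝ × (ℝ × (Fin m → ℝ)) | 0 < q'.2.1} :=
        isOpen_lt continuous_const (continuous_fst.comp continuous_snd)
      refine Filter.eventuallyEq_of_mem (hopen.mem_nhds h) fun q' hq' => ?_
      rw [Real.sign_of_pos hq', Real.sign_of_pos h]
  have hc_sign : ContinuousOn
      (fun q : ℝ × (ℝ × (Fin m → ℝ)) => -(Real.sign q.2.1) / q.2.1 ^ 2)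
      (Set.univ ×ˢ U) := by
    intro q hq
    have hne : q.2.1 ≠ 0 := hUne q.2 hq.2
    refine ContinuousAt.continuousWithinAt ?_
    have hev : (fun q' : ℝ × (ℝ × (Fin m → ℝ)) => -(Real.sign q'.2.1) / q'.2.1 ^ 2)
        =ᶠ[nhds q] fun q' => -(Real.sign q.2.1) / q'.2.1 ^ 2 := by
      filter_upwards [hsignev q hne] with q' h
      rw [h]
    have hbase : ContinuousAt
        (fun q' : ℝ × (ℝ × (Fin m → ℝ)) => -(Real.sign q.2.1) / q'.2.1 ^ 2) q :=
      continuousAt_const.div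
        (((continuous_fst.comp continuous_snd).pow 2).continuousAt)
        (pow_ne_zero 2 hne)
    exact hbase.congr hev.symm
  have hc_int : ContinuousOn (fun q : ℝ × (ℝ × (Fin m → ℝ)) =>
      q.1 * densNum μ Y φ q.1 q.2 - ∑ j, q.2.2 j * densNumX μ Y φ j q.1 q.2)
      (Set.univ ×ˢ U) := by
    refine ContinuousOn.sub (ContinuousOn.mul continuous_fst.continuousOn hCont1) ?_
    refine continuousOn_finset_sum _ fun j _ => ContinuousOn.mul ?_ (hCont2 j)
    exact ((continuous_apply j).comp (continuous_snd.comp continuous_snd)).continuousOn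
  refine ContinuousOn.congr (hc_sign.mul hc_int) ?_
  intro q hq
  simp only
  rw [hint_eq q hq.2]; rfl

end ContSection
/-- Under Assumption A, `F(z,u) = P(Σ u_i X_i ≤ z)` is partially differentiable in `u₁` with
jointly continuous derivative
`∂F/∂u₁ = -sign(u₁) u₁⁻² E[(z - Σ_{j≥2} u_j X_j) φ(u₁⁻¹(z - Σ_{j≥2} u_j X_j), X₂,…,X_d)]`. -/
theorem stmt11 {Ω : Type*} [MeasurableSpace Ω] (μ : Measure Ω) [IsProbabilityMeasure μ]
    (m : ℕ) (hm : 1 ≤ m)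
    (X1 : Ω → ℝ) (Y : Ω → (Fin m → ℝ)) (hX1 : Measurable X1) (hY : Measurable Y)
    (φ : ℝ → (Fin m → ℝ) → ℝ) (hφ : IsCondDensity μ X1 Y φ)
    (U : Set (ℝ × (Fin m → ℝ))) (hA : AssumptionA μ X1 Y φ U) :
    (∀ (z : ℝ), ∀ p ∈ U,
      HasDerivAt (fun s => Fcdf μ X1 Y z (s, p.2))
        (-(Real.sign p.1) / p.1 ^ 2
          * ∫ ω, (z - ∑ j, p.2 j * Y ω j)
              * φ (p.1⁻¹ * (z - ∑ j, p.2 j * Y ω j)) (Y ω) ∂μ) p.1) ∧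
    ContinuousOn (fun q : ℝ × (ℝ × (Fin m → ℝ)) =>
        -(Real.sign q.2.1) / q.2.1 ^ 2
          * ∫ ω, (q.1 - ∑ j, q.2.2 j * Y ω j)
              * φ (q.2.1⁻¹ * (q.1 - ∑ j, q.2.2 j * Y ω j)) (Y ω) ∂μ)
      (Set.univ ×ˢ U) := by
  constructor
  · intro z p hp
    exact deriv_part hX1 hY hφ hA z p hp
  · exact cont_part hY hA
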